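/- Let S : {0,1}ⁿ → {0,1}ⁿ with RG(S) having no directed cycle, and let P be a family of nonempty subsets of {1,…,n} covering {1,…,n}. Then the P-asynchronous STG of S contains no cycle of length ≥ 2; that is, there do not exist two distinct states x ≠ y lying on a common directed cycle. -/

import Mathlib

def flipCoord {n : ℕ} (x : Fin n → Bool) (j : Fin n) : Fin n → Bool :=
  Function.update x j (!(x j))

def RGEdge {n : ℕ} (S : (Fin n → Bool) → Fin n → Bool) (i j : Fin n) : Prop :=
  ∃ x, S x j ≠ S (flipCoord x i) j

def updSet {n : ℕ} (S : (Fin n → Bool) → Fin n → Bool) (x : Fin n → Bool) :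
    Finset (Fin n) :=
  Finset.univ.filter fun i => S x i ≠ x i

def flipSet {n : ℕ} (x : Fin n → Bool) (K : Finset (Fin n)) : Fin n → Bool :=
  fun i => if i ∈ K then !(x i) else x i

def PStep {n : ℕ} (P : Set (Finset (Fin n))) (S : (Fin n → Bool) → Fin n → Bool)
    (x y : Fin n → Bool) : Prop :=
  ∃ J ∈ P, (J ∩ updSet S x).Nonempty ∧ y = flipSet x (J ∩ updSet S x)

open Relation

/-- If the value of `S · i` differs on `x` and `y`, there is a coordinate where `x` and
`y` differ that has an `RG`-edge into `i`. -/
lemma exists_edge_of_ne {n : ℕ} (S : (Fin n → Bool) → Fin n → Bool) (i : Fin n) :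
    ∀ x y : Fin n → Bool, S x i ≠ S y i → ∃ j, x j ≠ y j ∧ RGEdge S j i := by
  classical
  suffices H : ∀ k : ℕ, ∀ x y : Fin n → Bool,
      (Finset.univ.filter fun j => x j ≠ y j).card = k →
      S x i ≠ S y i → ∃ j, x j ≠ y j ∧ RGEdge S j i by
    intro x y h
    exact H _ x y rfl h
  intro k
  induction k with
  | zero =>
    intro x y hcard h
    exfalso
    apply h
    have : x = y := by
      funext j
      by_contra hj
      have : j ∈ Finset.univ.filter fun j => x j ≠ y j := by
        simp [hj]
      rw [Finset.card_eq_zero] at hcard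
      simp [hcard] at this
    rw [this]
  | succ k ih =>
    intro x y hcard h
    have hne : (Finset.univ.filter fun j => x j ≠ y j).Nonempty := by
      rw [← Finset.card_pos, hcard]; omega
    obtain ⟨j, hj⟩ := hne
    simp only [Finset.mem_filter] at hj
    have hxyj : x j ≠ y j := hj.2
    by_cases hS : S x i ≠ S (flipCoord x j) i
    · exact ⟨j, hxyj, x, hS⟩
    · push_neg at hS
      have hflip : flipCoord x j j = y j := by
        simp only [flipCoord, Function.update_self]
        cases hx : x j <;> cases hy : y j <;> simp_all
      have hcard' : (Finset.univ.filter fun j' => flipCoord x j j' ≠ y j').card = k := by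
        have hset : (Finset.univ.filter fun j' => flipCoord x j j' ≠ y j')
            = (Finset.univ.filter fun j' => x j' ≠ y j').erase j := by
          ext j'
          by_cases hjj : j' = j
          · subst hjj; simp [hflip]
          · rw [Finset.mem_erase, Finset.mem_filter, Finset.mem_filter]; simp [hjj, flipCoord, Function.update_of_ne hjj]
        rw [hset, Finset.card_erase_of_mem (by simp [hxyj]), hcard]
        omega
      obtain ⟨j', hj', he⟩ := ih (flipCoord x j) y hcard' (hS ▸ h)
      have hjj : j' ≠ j := by
        intro hh; subst hh; exact hj' hflip
      refine ⟨j', ?_, he⟩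
      rwa [flipCoord, Function.update_of_ne hjj] at hj'

/-- First step along a path where coordinate `i` changes its value. -/
lemma first_flip {n : ℕ} {P : Set (Finset (Fin n))} {S : (Fin n → Bool) → Fin n → Bool}
    {a b : Fin n → Bool} (h : ReflTransGen (PStep P S) a b) :
    ∀ i : Fin n, a i ≠ b i →
    ∃ p p', ReflTransGen (PStep P S) a p ∧ PStep P S p p' ∧
      ReflTransGen (PStep P S) p' b ∧ p i = a i ∧ S p i ≠ p i := by
  induction h using Relation.ReflTransGen.head_induction_on with
  | refl => exact fun i hne => absurd rfl hne
  | head hac hcb ih =>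
    rename_i a c
    intro i hne
    by_cases hi : a i = c i
    · obtain ⟨p, p', h1, h2, h3, h4, h5⟩ := ih i (hi ▸ hne)
      exact ⟨p, p', ReflTransGen.head hac h1, h2, h3, hi ▸ h4, h5⟩
    · refine ⟨a, c, ReflTransGen.refl, hac, hcb, rfl, ?_⟩
      obtain ⟨J, hJ, hJne, hc⟩ := hac
      have hiK : i ∈ J ∩ updSet S a := by
        by_contra hiK
        apply hi
        rw [hc]
        simp [flipSet, hiK]
      have := Finset.mem_inter.mp hiK
      simpa [updSet] using this.2

lemma bool_aux1 : ∀ a b : Bool, a ≠ b → b = !a := by decide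
lemma bool_aux2 : ∀ a b : Bool, a ≠ b → a = !b := by decide

theorem no_P_asynchronous_cycle {n : ℕ} (S : (Fin n → Bool) → Fin n → Bool)
    (P : Set (Finset (Fin n)))
    (hP₁ : ∀ J ∈ P, J.Nonempty) (hP₂ : ∀ i : Fin n, ∃ J ∈ P, i ∈ J)
    (hacyc : ∀ v : Fin n, ¬ Relation.TransGen (RGEdge S) v v) :
    ¬ ∃ x y : Fin n → Bool, x ≠ y ∧
      Relation.ReflTransGen (PStep P S) x y ∧
      Relation.ReflTransGen (PStep P S) y x := by
  classical
  rintro ⟨x, y, hxy, hxyR, hyxR⟩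
  set C : Set (Fin n → Bool) :=
    {z | ReflTransGen (PStep P S) x z ∧ ReflTransGen (PStep P S) z x} with hC
  have hxC : x ∈ C := ⟨ReflTransGen.refl, ReflTransGen.refl⟩
  have hyC : y ∈ C := ⟨hxyR, hyxR⟩
  have hCC : ∀ z ∈ C, ∀ w ∈ C, ReflTransGen (PStep P S) z w :=
    fun z hz w hw => hz.2.trans hw.1
  set V : Set (Fin n) := {i | ∃ z ∈ C, ∃ w ∈ C, z i ≠ w i} with hV
  have hVne : V.Nonempty := by
    obtain ⟨i, hi⟩ := Function.ne_iff.mp hxy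
    exact ⟨i, x, hxC, y, hyC, hi⟩
  have key : ∀ i ∈ V, ∃ j ∈ V, RGEdge S j i := by
    rintro i ⟨z, hz, w, hw, hzw⟩
    by_cases hSconst : ∃ z' ∈ C, ∃ w' ∈ C, S z' i ≠ S w' i
    · obtain ⟨z', hz', w', hw', hS⟩ := hSconst
      obtain ⟨j, hj, he⟩ := exists_edge_of_ne S i z' w' hS
      exact ⟨j, ⟨z', hz', w', hw', hj⟩, he⟩
    · exfalso
      push_neg at hSconst
      have hconst : ∀ z' ∈ C, S z' i = S x i := fun z' hz' => hSconst z' hz' x hxC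
      obtain ⟨a, b, ha, hb, hai, hbi⟩ :
          ∃ a b, a ∈ C ∧ b ∈ C ∧ a i = !(S x i) ∧ b i = S x i := by
        by_cases hzc : z i = S x i
        · exact ⟨w, z, hw, hz, by rw [bool_aux1 _ _ hzw, hzc], hzc⟩
        · refine ⟨z, w, hz, hw, bool_aux2 _ _ hzc, ?_⟩
          rw [bool_aux1 _ _ hzw, bool_aux2 _ _ hzc, Bool.not_not]
      have hba : ReflTransGen (PStep P S) b a := hCC b hb a ha
      have hbne : b i ≠ a i := by rw [hai, hbi]; simp
      obtain ⟨p, p', h1, h2, h3, h4, h5⟩ := first_flip hba i hbne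
      have hpC : p ∈ C := ⟨hb.1.trans h1, ((ReflTransGen.single h2).trans h3).trans ha.2⟩
      exact h5 (by rw [hconst p hpC, h4, hbi])
  -- well-founded descent
  have hirr : IsIrrefl (Fin n) (TransGen (RGEdge S)) := ⟨hacyc⟩
  have htr : IsTrans (Fin n) (TransGen (RGEdge S)) := inferInstance
  have hwf : WellFounded (TransGen (RGEdge S)) :=
    Finite.wellFounded_of_trans_of_irrefl _
  obtain ⟨i, hiV, hmin⟩ := hwf.has_min V hVne
  obtain ⟨j, hjV, hji⟩ := key i hiV
  exact hmin j hjV (TransGen.single hji)
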